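/- There exists a constant C > 0 such that for every continuously differentiable function f : ℝ³ → ℝ with compact support, ‖f‖_{L⁴(ℝ³)} ≤ C · ‖f‖_{L²(ℝ³)}^{1/4} · ‖∇f‖_{L²(ℝ³)}^{3/4}, where ∇f denotes the (Fréchet) derivative of f and ‖∇f‖_{L²(ℝ³)} is the L² norm (with respect to Lebesgue measure on ℝ³) of the pointwise operator norm of ∇f. -/

import Mathlib

open MeasureTheory ENNReal NNReal

lemma interp_246 {α : Type*} [MeasurableSpace α] {μ : Measure α} {f : α → ℝ}
    (hf : AEMeasurable f μ) :
    eLpNorm f 4 μ ≤ (eLpNorm f 2 μ) ^ ((1:ℝ)/4) * (eLpNorm f 6 μ) ^ ((3:ℝ)/4) := by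
  set g : α → ℝ≥0∞ := fun x => (‖f x‖₊ : ℝ≥0∞) with hg
  have hgm : AEMeasurable g μ := hf.enorm
  have hconj : Real.HolderConjugate 2 2 := Real.HolderConjugate.two_two
  have key : ∫⁻ x, g x ^ (4:ℝ) ∂μ ≤
      (∫⁻ x, g x ^ (2:ℝ) ∂μ) ^ ((1:ℝ)/2) * (∫⁻ x, g x ^ (6:ℝ) ∂μ) ^ ((1:ℝ)/2) := by
    have h := ENNReal.lintegral_mul_le_Lp_mul_Lq μ hconj hgm (hgm.pow_const (3:ℝ))
    have e1 : ∀ x, g x * g x ^ (3:ℝ) = g x ^ (4:ℝ) := by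
      intro x
      nth_rewrite 1 [← ENNReal.rpow_one (g x)]
      rw [← ENNReal.rpow_add_of_nonneg] <;> norm_num
    have e2 : ∀ x, (g x ^ (3:ℝ)) ^ (2:ℝ) = g x ^ (6:ℝ) := by
      intro x; rw [← ENNReal.rpow_mul]; norm_num
    simp only [e1, e2] at h
    calc ∫⁻ x, g x ^ (4:ℝ) ∂μ = ∫⁻ a, (g * fun x => g x ^ (3:ℝ)) a ∂μ := by
          simp only [Pi.mul_apply, e1]
      _ ≤ _ := h
  rw [eLpNorm_eq_lintegral_rpow_enorm_toReal (by norm_num) (by norm_num),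
      eLpNorm_eq_lintegral_rpow_enorm_toReal (by norm_num) (by norm_num),
      eLpNorm_eq_lintegral_rpow_enorm_toReal (by norm_num) (by norm_num)]
  simp only [ENNReal.toReal_ofNat]
  simp only [show ∀ x, ‖f x‖ₑ = g x from fun x => rfl]
  calc (∫⁻ x, g x ^ (4:ℝ) ∂μ) ^ ((1:ℝ)/4)
      ≤ ((∫⁻ x, g x ^ (2:ℝ) ∂μ) ^ ((1:ℝ)/2) * (∫⁻ x, g x ^ (6:ℝ) ∂μ) ^ ((1:ℝ)/2)) ^ ((1:ℝ)/4) :=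
        ENNReal.rpow_le_rpow key (by norm_num)
    _ = ((∫⁻ x, g x ^ (2:ℝ) ∂μ) ^ ((1:ℝ)/2)) ^ ((1:ℝ)/4) *
          ((∫⁻ x, g x ^ (6:ℝ) ∂μ) ^ ((1:ℝ)/2)) ^ ((1:ℝ)/4) :=
        ENNReal.mul_rpow_of_nonneg _ _ (by norm_num)
    _ = ((∫⁻ x, g x ^ (2:ℝ) ∂μ) ^ ((1:ℝ)/2)) ^ ((1:ℝ)/4) *
          ((∫⁻ x, g x ^ (6:ℝ) ∂μ) ^ ((1:ℝ)/6)) ^ ((3:ℝ)/4) := by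
        simp only [← ENNReal.rpow_mul]
        congr 1
        norm_num


/-- Ladyzhenskaya interpolation inequality in ℝ³:
`‖f‖_{L⁴} ≤ C ‖f‖_{L²}^{1/4} ‖∇f‖_{L²}^{3/4}` for smooth compactly supported
functions. -/
theorem L4_interpolation_R3 :
    ∃ C : ℝ, 0 < C ∧
      ∀ f : EuclideanSpace ℝ (Fin 3) → ℝ, ContDiff ℝ 1 f → HasCompactSupport f →
        (eLpNorm f 4 volume).toReal ≤
          C * (eLpNorm f 2 volume).toReal ^ ((1 : ℝ) / 4) *
            (eLpNorm (fun x => ‖fderiv ℝ f x‖) 2 volume).toReal ^ ((3 : ℝ) / 4) := by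
  have hdim : 0 < Module.finrank ℝ (EuclideanSpace ℝ (Fin 3)) := by
    simp [finrank_euclideanSpace]
  set C₀ : ℝ≥0 := SNormLESNormFDerivOfEqConst (F := ℝ) (volume : Measure (EuclideanSpace ℝ (Fin 3))) 2 with hC₀
  refine ⟨(C₀ : ℝ) ^ ((3:ℝ)/4) + 1, by positivity, ?_⟩
  intro f hf hsupp
  have hA : eLpNorm f 2 volume ≠ ⊤ :=
    (hf.continuous.memLp_of_hasCompactSupport hsupp).eLpNorm_ne_top
  have hfd_cont : Continuous (fderiv ℝ f) := hf.continuous_fderiv one_ne_zero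
  have hfd_supp : HasCompactSupport (fderiv ℝ f) := hsupp.fderiv ℝ
  have hB : eLpNorm (fderiv ℝ f) 2 volume ≠ ⊤ :=
    (hfd_cont.memLp_of_hasCompactSupport hfd_supp).eLpNorm_ne_top
  have h6 : eLpNorm f 6 volume ≤ C₀ * eLpNorm (fderiv ℝ f) 2 volume := by
    refine eLpNorm_le_eLpNorm_fderiv_of_eq volume hf hsupp (p := 2) (p' := 6)
      (by norm_num) hdim ?_
    rw [finrank_euclideanSpace]
    norm_num
  have hint := interp_246 (μ := (volume : Measure (EuclideanSpace ℝ (Fin 3))))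
    (hf.continuous.aemeasurable)
  have chain : eLpNorm f 4 volume ≤
      (C₀ : ℝ≥0∞) ^ ((3:ℝ)/4) * eLpNorm f 2 volume ^ ((1:ℝ)/4) *
        eLpNorm (fderiv ℝ f) 2 volume ^ ((3:ℝ)/4) := by
    calc eLpNorm f 4 volume
        ≤ eLpNorm f 2 volume ^ ((1:ℝ)/4) * eLpNorm f 6 volume ^ ((3:ℝ)/4) := hint
      _ ≤ eLpNorm f 2 volume ^ ((1:ℝ)/4) *
            ((C₀ : ℝ≥0∞) * eLpNorm (fderiv ℝ f) 2 volume) ^ ((3:ℝ)/4) := by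
          gcongr
      _ = (C₀ : ℝ≥0∞) ^ ((3:ℝ)/4) * eLpNorm f 2 volume ^ ((1:ℝ)/4) *
            eLpNorm (fderiv ℝ f) 2 volume ^ ((3:ℝ)/4) := by
          rw [ENNReal.mul_rpow_of_nonneg _ _ (by norm_num)]
          ring
  have hRHS : (C₀ : ℝ≥0∞) ^ ((3:ℝ)/4) * eLpNorm f 2 volume ^ ((1:ℝ)/4) *
      eLpNorm (fderiv ℝ f) 2 volume ^ ((3:ℝ)/4) ≠ ⊤ := by
    apply ENNReal.mul_ne_top
    apply ENNReal.mul_ne_top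
    · exact ENNReal.rpow_ne_top_of_nonneg (by norm_num) ENNReal.coe_ne_top
    · exact ENNReal.rpow_ne_top_of_nonneg (by norm_num) hA
    · exact ENNReal.rpow_ne_top_of_nonneg (by norm_num) hB
  have := ENNReal.toReal_mono hRHS chain
  rw [ENNReal.toReal_mul, ENNReal.toReal_mul, ← ENNReal.toReal_rpow,
      ← ENNReal.toReal_rpow, ← ENNReal.toReal_rpow] at this
  have hnorm : eLpNorm (fun x => ‖fderiv ℝ f x‖) 2
      (volume : Measure (EuclideanSpace ℝ (Fin 3))) = eLpNorm (fderiv ℝ f) 2 volume :=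
    eLpNorm_norm _
  rw [hnorm]
  refine this.trans ?_
  have h1 : ((C₀ : ℝ≥0∞).toReal) ^ ((3:ℝ)/4) ≤ (C₀ : ℝ) ^ ((3:ℝ)/4) + 1 := by
    simp only [ENNReal.coe_toReal]
    linarith
  gcongr
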